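/- Let π : ℚ^n → ℚ^m be a surjective linear map and Σ a projective quasifan in ℚ^m. Then the pullback collection Σ' = {π⁻¹(σ) : σ ∈ Σ} is a projective quasifan in ℚ^n: if Ψ is a strictly convex piecewise linear function on Σ, then Ψ ∘ π is a strictly convex piecewise linear function on Σ'. -/

import Mathlib

/-- The finitely generated convex cone on a set `T`: all nonnegative rational
combinations of elements of `T`. -/
def ConeGen {V : Type*} [AddCommGroup V] [Module ℚ V] (T : Set V) : Set V :=
  {x | ∃ (s : Finset V) (c : V → ℚ), ↑s ⊆ T ∧ (∀ v, 0 ≤ c v) ∧ x = ∑ v ∈ s, c v • v}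

/-- A (rational) polyhedral cone: the cone generated by finitely many vectors. -/
def IsPolyCone {V : Type*} [AddCommGroup V] [Module ℚ V] (σ : Set V) : Prop :=
  ∃ T : Finset V, σ = ConeGen (↑T : Set V)

/-- A cone is strongly convex if it contains no line. -/
def IsStronglyConvex {V : Type*} [AddCommGroup V] [Module ℚ V] (σ : Set V) : Prop :=
  ∀ x ∈ σ, -x ∈ σ → x = 0

/-- The dimension of a cone: the dimension of its linear span. -/
noncomputable def coneDim {V : Type*} [AddCommGroup V] [Module ℚ V] (σ : Set V) : ℕ :=
  Module.finrank ℚ (Submodule.span ℚ σ)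

/-- `τ` is a face of `σ`: the intersection of `σ` with a supporting hyperplane
(including `σ` itself, via the zero functional). -/
def IsFace {V : Type*} [AddCommGroup V] [Module ℚ V] (σ τ : Set V) : Prop :=
  ∃ m : V →ₗ[ℚ] ℚ, (∀ x ∈ σ, 0 ≤ m x) ∧ τ = σ ∩ {x | m x = 0}

/-- `τ` is a facet of `σ`: a face of dimension one less. -/
def IsFacet {V : Type*} [AddCommGroup V] [Module ℚ V] (σ τ : Set V) : Prop :=
  IsFace σ τ ∧ coneDim τ + 1 = coneDim σ

/-- A quasifan: a finite collection of (not necessarily strongly) convex rational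
polyhedral cones, closed under taking facets, such that the intersection of any two
cones is a face of each. -/
def IsQuasifan {V : Type*} [AddCommGroup V] [Module ℚ V] (F : Set (Set V)) : Prop :=
  F.Finite ∧ (∀ σ ∈ F, IsPolyCone σ) ∧
  (∀ σ ∈ F, ∀ τ, IsFacet σ τ → τ ∈ F) ∧
  (∀ σ ∈ F, ∀ σ' ∈ F, IsFace σ (σ ∩ σ') ∧ IsFace σ' (σ ∩ σ'))

/-- A collection of cones is complete if it covers the whole space. -/
def IsCompleteFan {V : Type*} [AddCommGroup V] [Module ℚ V] (F : Set (Set V)) : Prop :=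
  ⋃₀ F = Set.univ

/-- `Ψ` is piecewise linear with respect to `F`: linear on each cone of `F`. -/
def IsPLOn {V : Type*} [AddCommGroup V] [Module ℚ V] (F : Set (Set V)) (Ψ : V → ℚ) : Prop :=
  ∀ σ ∈ F, ∃ ℓ : V →ₗ[ℚ] ℚ, ∀ x ∈ σ, Ψ x = ℓ x

/-- `Ψ` is a strictly convex piecewise linear function adapted to `F`: it is linear on
each cone, and for each maximal cone the linear piece lies strictly below `Ψ` away
from that cone. -/
def IsStrictlyConvexPLOn {V : Type*} [AddCommGroup V] [Module ℚ V]
    (F : Set (Set V)) (Ψ : V → ℚ) : Prop :=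
  IsPLOn F Ψ ∧ ∀ σ ∈ F, Maximal (· ∈ F) σ →
    ∃ ℓ : V →ₗ[ℚ] ℚ, (∀ x ∈ σ, Ψ x = ℓ x) ∧ ∀ x ∉ σ, ℓ x < Ψ x

/-- A quasifan is projective if it admits a strictly convex piecewise linear function. -/
def IsProjectiveFan {V : Type*} [AddCommGroup V] [Module ℚ V] (F : Set (Set V)) : Prop :=
  ∃ Ψ : V → ℚ, IsStrictlyConvexPLOn F Ψ


section Helpers
variable {V : Type*} [AddCommGroup V] [Module ℚ V]

lemma mem_coneGen_iff {T : Finset V} {x : V} :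
    x ∈ ConeGen (↑T : Set V) ↔ ∃ c : V → ℚ, (∀ v, 0 ≤ c v) ∧ x = ∑ v ∈ T, c v • v := by
  classical
  constructor
  · rintro ⟨s, c, hsub, hc, rfl⟩
    refine ⟨fun v => if v ∈ s then c v else 0, fun v => ?_, ?_⟩
    · by_cases h : v ∈ s <;> simp [h, hc v]
    · calc ∑ v ∈ s, c v • v = ∑ v ∈ s, (if v ∈ s then c v else 0) • v :=
            Finset.sum_congr rfl (fun v hv => by simp [hv])
        _ = ∑ v ∈ T, (if v ∈ s then c v else 0) • v :=
            Finset.sum_subset (Finset.coe_subset.mp hsub) (fun v _ hv => by simp [hv])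
  · rintro ⟨c, hc, rfl⟩
    exact ⟨T, c, subset_rfl, hc, rfl⟩

lemma coneGen_zero_mem (T : Finset V) : (0 : V) ∈ ConeGen (↑T : Set V) :=
  mem_coneGen_iff.mpr ⟨0, fun _ => le_refl 0, by simp⟩

lemma coneGen_add_mem {T : Finset V} {x y : V} (hx : x ∈ ConeGen (↑T : Set V))
    (hy : y ∈ ConeGen (↑T : Set V)) : x + y ∈ ConeGen (↑T : Set V) := by
  obtain ⟨c, hc, rfl⟩ := mem_coneGen_iff.mp hx
  obtain ⟨d, hd, rfl⟩ := mem_coneGen_iff.mp hy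
  exact mem_coneGen_iff.mpr ⟨c + d, fun v => add_nonneg (hc v) (hd v), by
    simp [add_smul, Finset.sum_add_distrib]⟩

lemma coneGen_smul_mem {T : Finset V} {a : ℚ} (ha : 0 ≤ a) {x : V}
    (hx : x ∈ ConeGen (↑T : Set V)) : a • x ∈ ConeGen (↑T : Set V) := by
  obtain ⟨c, hc, rfl⟩ := mem_coneGen_iff.mp hx
  exact mem_coneGen_iff.mpr ⟨fun v => a * c v, fun v => mul_nonneg ha (hc v), by
    simp [Finset.smul_sum, smul_smul]⟩

lemma subset_coneGen {T : Finset V} {t : V} (ht : t ∈ T) : t ∈ ConeGen (↑T : Set V) := by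
  classical
  refine mem_coneGen_iff.mpr ⟨fun v => if v = t then 1 else 0, fun v => ?_, ?_⟩
  · by_cases h : v = t <;> simp [h]
  · simp [ite_smul, ht]

lemma coneGen_sum_mem {ι : Type*} {T : Finset V} (s : Finset ι) (g : ι → V)
    (h : ∀ i ∈ s, g i ∈ ConeGen (↑T : Set V)) : (∑ i ∈ s, g i) ∈ ConeGen (↑T : Set V) := by
  classical
  induction s using Finset.induction_on with
  | empty => simpa using coneGen_zero_mem T
  | insert i s hi ih =>
      rw [Finset.sum_insert hi]
      exact coneGen_add_mem (h _ (Finset.mem_insert_self _ _))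
        (ih fun i hi' => h i (Finset.mem_insert_of_mem hi'))

end Helpers

lemma span_preimage_eq_comap {n m : ℕ} (π : (Fin n → ℚ) →ₗ[ℚ] (Fin m → ℚ))
    (s : (Fin m → ℚ) →ₗ[ℚ] (Fin n → ℚ)) (hs : π ∘ₗ s = LinearMap.id)
    {σ : Set (Fin m → ℚ)} (h0 : (0 : Fin m → ℚ) ∈ σ) :
    Submodule.span ℚ (π ⁻¹' σ) = (Submodule.span ℚ σ).comap π := by
  have hπs : ∀ y, π (s y) = y := fun y => by simpa using LinearMap.congr_fun hs y
  apply le_antisymm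
  · rw [Submodule.span_le]
    intro x hx
    rw [SetLike.mem_coe, Submodule.mem_comap]
    exact Submodule.subset_span hx
  · intro x hx
    rw [Submodule.mem_comap] at hx
    have h1 : x - s (π x) ∈ Submodule.span ℚ (π ⁻¹' σ) :=
      Submodule.subset_span (by simp [Set.mem_preimage, map_sub, hπs, h0])
    have h2 : s (π x) ∈ Submodule.span ℚ (π ⁻¹' σ) := by
      have hmem : s (π x) ∈ Submodule.map s (Submodule.span ℚ σ) := ⟨π x, hx, rfl⟩
      rw [Submodule.map_span] at hmem
      refine Submodule.span_mono ?_ hmem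
      rintro _ ⟨y, hy, rfl⟩
      simp [Set.mem_preimage, hπs, hy]
    have := Submodule.add_mem _ h1 h2
    simpa using this

set_option synthInstance.maxHeartbeats 1000000 in
lemma finrank_comap_eq {n m : ℕ} (π : (Fin n → ℚ) →ₗ[ℚ] (Fin m → ℚ))
    (hπ : Function.Surjective π) (S : Submodule ℚ (Fin m → ℚ)) :
    Module.finrank ℚ (S.comap π) = Module.finrank ℚ S + Module.finrank ℚ (LinearMap.ker π) := by
  classical
  have hres : ∀ x ∈ S.comap π, π x ∈ S := fun x hx => hx
  set f : (S.comap π) →ₗ[ℚ] S := π.restrict hres with hf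
  have hker : LinearMap.ker f = (LinearMap.ker π).comap (S.comap π).subtype := by
    ext ⟨x, hx⟩
    simp [hf, LinearMap.mem_ker, LinearMap.restrict_apply, Submodule.mem_comap,
      Subtype.ext_iff]
  have hrange : LinearMap.range f = ⊤ := by
    rw [LinearMap.range_eq_top]
    rintro ⟨y, hy⟩
    obtain ⟨x, rfl⟩ := hπ y
    exact ⟨⟨x, hy⟩, Subtype.ext (by simp [hf, LinearMap.restrict_apply])⟩
  have h1 := LinearMap.finrank_range_add_finrank_ker f
  rw [hrange, finrank_top, hker] at h1
  have hle : LinearMap.ker π ≤ S.comap π := fun k hk => by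
    simp [Submodule.mem_comap, LinearMap.mem_ker.mp hk, S.zero_mem]
  have h2 : Module.finrank ℚ (Submodule.comap (Submodule.comap π S).subtype (LinearMap.ker π))
      = Module.finrank ℚ (LinearMap.ker π) :=
    (Submodule.comapSubtypeEquivOfLe hle).finrank_eq
  omega

lemma isPolyCone_preimage {n m : ℕ} (π : (Fin n → ℚ) →ₗ[ℚ] (Fin m → ℚ))
    (s : (Fin m → ℚ) →ₗ[ℚ] (Fin n → ℚ)) (hs : π ∘ₗ s = LinearMap.id)
    (T : Finset (Fin m → ℚ)) :
    IsPolyCone (π ⁻¹' ConeGen (↑T : Set (Fin m → ℚ))) := by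
  classical
  have hπs : ∀ y, π (s y) = y := fun y => by simpa using LinearMap.congr_fun hs y
  obtain ⟨K, hK⟩ := IsNoetherian.noetherian (LinearMap.ker π)
  set G : Finset (Fin n → ℚ) := T.image s ∪ K ∪ K.image (fun v => -v) with hG
  refine ⟨G, ?_⟩
  have hTG : ∀ t ∈ T, s t ∈ G := fun t ht => by
    simp only [hG, Finset.mem_union, Finset.mem_image]
    exact Or.inl (Or.inl ⟨t, ht, rfl⟩)
  have key : ∀ z ∈ Submodule.span ℚ (↑K : Set (Fin n → ℚ)),
      z ∈ ConeGen (↑G : Set (Fin n → ℚ)) ∧ -z ∈ ConeGen (↑G : Set (Fin n → ℚ)) := by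
    intro z hz
    induction hz using Submodule.span_induction with
    | mem w hw =>
        have hw' : w ∈ K := hw
        constructor
        · exact subset_coneGen (by simp [hG, Finset.mem_union, hw'])
        · refine subset_coneGen ?_
          simp only [hG, Finset.mem_union, Finset.mem_image]
          exact Or.inr ⟨w, hw', rfl⟩
    | zero => exact ⟨coneGen_zero_mem G, by simpa using coneGen_zero_mem G⟩
    | add u v _ _ ihu ihv =>
        exact ⟨coneGen_add_mem ihu.1 ihv.1, by
          rw [neg_add]; exact coneGen_add_mem ihu.2 ihv.2⟩
    | smul a u _ ihu =>
        rcases le_total 0 a with ha | ha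
        · exact ⟨coneGen_smul_mem ha ihu.1, by
            rw [← smul_neg]; exact coneGen_smul_mem ha ihu.2⟩
        · constructor
          · have he : a • u = (-a) • (-u) := by simp
            rw [he]; exact coneGen_smul_mem (neg_nonneg.mpr ha) ihu.2
          · have he : -(a • u) = (-a) • u := by simp
            rw [he]; exact coneGen_smul_mem (neg_nonneg.mpr ha) ihu.1
  ext x
  simp only [Set.mem_preimage]
  constructor
  · intro hx
    obtain ⟨c, hc, hsum⟩ := mem_coneGen_iff.mp hx
    have h1 : s (π x) ∈ ConeGen (↑G : Set (Fin n → ℚ)) := by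
      rw [hsum, map_sum]
      refine coneGen_sum_mem _ _ fun t ht => ?_
      rw [map_smul]
      exact coneGen_smul_mem (hc t) (subset_coneGen (hTG t ht))
    have h2 : x - s (π x) ∈ ConeGen (↑G : Set (Fin n → ℚ)) := by
      refine (key _ ?_).1
      rw [hK]
      simp [LinearMap.mem_ker, map_sub, hπs]
    have := coneGen_add_mem h2 h1
    simpa using this
  · intro hx
    obtain ⟨c, hc, rfl⟩ := mem_coneGen_iff.mp hx
    rw [map_sum]
    refine coneGen_sum_mem _ _ fun v hv => ?_
    rw [map_smul]
    refine coneGen_smul_mem (hc v) ?_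
    rcases Finset.mem_union.mp hv with hv | hv
    · rcases Finset.mem_union.mp hv with hv | hv
      · obtain ⟨t, ht, rfl⟩ := Finset.mem_image.mp hv
        rw [hπs]
        exact subset_coneGen ht
      · have hv' : v ∈ LinearMap.ker π := hK ▸ Submodule.subset_span (Finset.mem_coe.mpr hv)
        rw [LinearMap.mem_ker.mp hv']
        exact coneGen_zero_mem T
    · obtain ⟨w, hw, rfl⟩ := Finset.mem_image.mp hv
      have hw' : w ∈ LinearMap.ker π := hK ▸ Submodule.subset_span (Finset.mem_coe.mpr hw)
      rw [map_neg, LinearMap.mem_ker.mp hw', neg_zero]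
      exact coneGen_zero_mem T

/-- The pullback of a projective quasifan along a surjective linear map is a projective
quasifan: if `Ψ` is strictly convex piecewise linear on `F`, then `Ψ ∘ π` is strictly
convex piecewise linear on the pullback collection `{π⁻¹(σ) : σ ∈ F}`. -/
theorem pullback_of_projective_quasifan {n m : ℕ}
    (π : (Fin n → ℚ) →ₗ[ℚ] (Fin m → ℚ)) (hπ : Function.Surjective π)
    (F : Set (Set (Fin m → ℚ))) (hF : IsQuasifan F) (hproj : IsProjectiveFan F) :
    IsQuasifan {τ | ∃ σ ∈ F, τ = π ⁻¹' σ} ∧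
    (∀ Ψ : (Fin m → ℚ) → ℚ, IsStrictlyConvexPLOn F Ψ →
      IsStrictlyConvexPLOn {τ | ∃ σ ∈ F, τ = π ⁻¹' σ} (Ψ ∘ π)) ∧
    IsProjectiveFan {τ | ∃ σ ∈ F, τ = π ⁻¹' σ} := by
  classical
  obtain ⟨s, hs⟩ := π.exists_rightInverse_of_surjective (LinearMap.range_eq_top.mpr hπ)
  have hπs : ∀ y, π (s y) = y := fun y => by simpa using LinearMap.congr_fun hs y
  obtain ⟨hfin, hpoly, hfacet, hface⟩ := hF
  have h0 : ∀ σ ∈ F, (0 : Fin m → ℚ) ∈ σ := by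
    intro σ hσ
    obtain ⟨T, rfl⟩ := hpoly σ hσ
    exact coneGen_zero_mem T
  have hPL : ∀ Ψ : (Fin m → ℚ) → ℚ, IsStrictlyConvexPLOn F Ψ →
      IsStrictlyConvexPLOn {τ | ∃ σ ∈ F, τ = π ⁻¹' σ} (Ψ ∘ π) := by
    rintro Ψ ⟨hpl, hsc⟩
    constructor
    · rintro τ ⟨σ, hσ, rfl⟩
      obtain ⟨ℓ, hℓ⟩ := hpl σ hσ
      exact ⟨ℓ ∘ₗ π, fun x hx => by simpa using hℓ (π x) hx⟩
    · rintro τ ⟨σ, hσ, rfl⟩ hmax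
      have hmaxσ : Maximal (· ∈ F) σ := by
        refine ⟨hσ, ?_⟩
        intro σ' hσ' hle
        have h2 := hmax.2 (show π ⁻¹' σ' ∈ {τ | ∃ σ ∈ F, τ = π ⁻¹' σ} from ⟨σ', hσ', rfl⟩)
          (Set.preimage_mono hle)
        intro y hy
        obtain ⟨x, rfl⟩ := hπ y
        exact h2 hy
      obtain ⟨ℓ, hℓ, hlt⟩ := hsc σ hσ hmaxσ
      exact ⟨ℓ ∘ₗ π, fun x hx => by simpa using hℓ (π x) hx,
        fun x hx => by simpa using hlt (π x) hx⟩
  have hQF : IsQuasifan {τ | ∃ σ ∈ F, τ = π ⁻¹' σ} := by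
    refine ⟨?_, ?_, ?_, ?_⟩
    · have he : {τ | ∃ σ ∈ F, τ = π ⁻¹' σ} = (fun σ => π ⁻¹' σ) '' F := by
        ext τ
        simp [Set.mem_image, eq_comm]
      rw [he]
      exact hfin.image _
    · rintro τ ⟨σ, hσ, rfl⟩
      obtain ⟨T, rfl⟩ := hpoly σ hσ
      exact isPolyCone_preimage π s hs T
    · rintro τ ⟨σ, hσ, rfl⟩ τ' ⟨⟨mm, hm, hτ'⟩, hd⟩
      have hmker : ∀ k, π k = 0 → mm k = 0 := by
        intro k hk
        have hk1 : k ∈ π ⁻¹' σ := by simp [Set.mem_preimage, hk, h0 σ hσ]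
        have hk2 : -k ∈ π ⁻¹' σ := by simp [Set.mem_preimage, hk, h0 σ hσ]
        have a := hm k hk1
        have b := hm (-k) hk2
        rw [map_neg] at b
        linarith
      have hfact : ∀ x, mm (s (π x)) = mm x := by
        intro x
        have h := hmker (s (π x) - x) (by simp [map_sub, hπs])
        rw [map_sub, sub_eq_zero] at h
        exact h
      set τ₀ : Set (Fin m → ℚ) := σ ∩ {y | (mm ∘ₗ s) y = 0} with hτ₀
      have h0τ₀ : (0 : Fin m → ℚ) ∈ τ₀ := ⟨h0 σ hσ, by simp⟩
      have hpre : τ' = π ⁻¹' τ₀ := by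
        rw [hτ', hτ₀]
        ext x
        simp [Set.mem_preimage, Set.mem_inter_iff, hfact x]
      have hface0 : IsFace σ τ₀ :=
        ⟨mm ∘ₗ s, fun y hy => by
          have hy' : s y ∈ π ⁻¹' σ := by simp [Set.mem_preimage, hπs, hy]
          simpa using hm (s y) hy', rfl⟩
      have hd0 : coneDim τ₀ + 1 = coneDim σ := by
        have e1 : coneDim (π ⁻¹' σ) = coneDim σ + Module.finrank ℚ (LinearMap.ker π) := by
          unfold coneDim
          rw [span_preimage_eq_comap π s hs (h0 σ hσ), finrank_comap_eq π hπ]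
        have e2 : coneDim (π ⁻¹' τ₀) = coneDim τ₀ + Module.finrank ℚ (LinearMap.ker π) := by
          unfold coneDim
          rw [span_preimage_eq_comap π s hs h0τ₀, finrank_comap_eq π hπ]
        rw [hpre, e2, e1] at hd
        omega
      exact ⟨τ₀, hfacet σ hσ τ₀ ⟨hface0, hd0⟩, hpre⟩
    · rintro τ ⟨σ, hσ, rfl⟩ τ' ⟨σ', hσ', rfl⟩
      rw [← Set.preimage_inter]
      obtain ⟨⟨m1, hm1, he1⟩, ⟨m2, hm2, he2⟩⟩ := hface σ hσ σ' hσ'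
      constructor
      · refine ⟨m1 ∘ₗ π, fun x hx => hm1 _ hx, ?_⟩
        rw [he1]
        ext x
        simp [Set.mem_preimage, Set.mem_inter_iff]
      · refine ⟨m2 ∘ₗ π, fun x hx => hm2 _ hx, ?_⟩
        rw [he2]
        ext x
        simp [Set.mem_preimage, Set.mem_inter_iff]
  refine ⟨hQF, hPL, ?_⟩
  obtain ⟨Ψ, hΨ⟩ := hproj
  exact ⟨Ψ ∘ π, hPL Ψ hΨ⟩
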